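/- Let a ∈ ℂ with a² ≠ 4 and let f = x⁴ + y⁴ + a·x²y² ∈ ℂ[x,y], with Jacobian ideal J = (∂f/∂x, ∂f/∂y) = (4x³ + 2axy², 4y³ + 2ax²y). Then the quotient algebra A = ℂ[x,y]/J is a finite-dimensional ℂ-vector space of dimension 9, with basis the classes of the monomials 1, x, y, x², xy, y², x²y, xy², x²y²; the subspace of A invariant under the induced involution (x,y) ↦ (−x,−y) has dimension 5, with basis the classes of 1, x², xy, y², x²y²; and the subspace of A invariant under both induced involutions (x,y) ↦ (−x,y) and (x,y) ↦ (x,−y) has dimension 4, with basis the classes of 1, x², y², x²y². -/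

import Mathlib

open MvPolynomial

/-- The polynomial `f = x⁴ + y⁴ + a·x²y²`. -/
noncomputable def f (a : ℂ) : MvPolynomial (Fin 2) ℂ :=
  X 0 ^ 4 + X 1 ^ 4 + C a * X 0 ^ 2 * X 1 ^ 2

/-- The Jacobian ideal `J = (∂f/∂x, ∂f/∂y)` of `f`. -/
noncomputable def J (a : ℂ) : Ideal (MvPolynomial (Fin 2) ℂ) :=
  Ideal.span {pderiv 0 (f a), pderiv 1 (f a)}

/-- The Jacobian (Milnor) algebra `A = ℂ[x,y]/J`. -/
abbrev A (a : ℂ) := MvPolynomial (Fin 2) ℂ ⧸ J a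

/-- The submodule of fixed points of a linear endomorphism. -/
def fixedPts {R M : Type*} [CommRing R] [AddCommGroup M] [Module R M]
    (φ : M →ₗ[R] M) : Submodule R M where
  carrier := {z | φ z = z}
  add_mem' := by
    intro x y hx hy
    simp only [Set.mem_setOf_eq, map_add] at *
    rw [hx, hy]
  zero_mem' := by simp
  smul_mem' := by
    intro c x hx
    simp only [Set.mem_setOf_eq, map_smul] at *
    rw [hx]

/-- The monomials `1, x, y, x², xy, y², x²y, xy², x²y²`. -/
noncomputable def mono₉ : Fin 9 → MvPolynomial (Fin 2) ℂ :=
  ![1, X 0, X 1, X 0 ^ 2, X 0 * X 1, X 1 ^ 2, X 0 ^ 2 * X 1, X 0 * X 1 ^ 2,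
    X 0 ^ 2 * X 1 ^ 2]

/-- The monomials `1, x², xy, y², x²y²`. -/
noncomputable def mono₅ : Fin 5 → MvPolynomial (Fin 2) ℂ :=
  ![1, X 0 ^ 2, X 0 * X 1, X 1 ^ 2, X 0 ^ 2 * X 1 ^ 2]

/-- The monomials `1, x², y², x²y²`. -/
noncomputable def mono₄ : Fin 4 → MvPolynomial (Fin 2) ℂ :=
  ![1, X 0 ^ 2, X 1 ^ 2, X 0 ^ 2 * X 1 ^ 2]

/-- For `a² ≠ 4`, the Jacobian algebra `A = ℂ[x,y]/(∂f/∂x, ∂f/∂y)` of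
`f = x⁴ + y⁴ + a·x²y²` is a `ℂ`-vector space of dimension 9 with basis the classes of
`1, x, y, x², xy, y², x²y, xy², x²y²`; the subspace invariant under the involution
induced by `(x,y) ↦ (−x,−y)` has dimension 5 with basis the classes of
`1, x², xy, y², x²y²`; and the subspace invariant under both involutions induced by
`(x,y) ↦ (−x,y)` and `(x,y) ↦ (x,−y)` has dimension 4 with basis the classes of
`1, x², y², x²y²`. -/
/- ======================  auxiliary development  ====================== -/

abbrev P := MvPolynomial (Fin 2) ℂ

noncomputable abbrev Q (a : ℂ) := Ideal.Quotient.mk (J a)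

noncomputable def ee (i j : ℕ) : Fin 2 →₀ ℕ := Finsupp.single 0 i + Finsupp.single 1 j

lemma eeq {i j k l : ℕ} : ee i j = ee k l ↔ i = k ∧ j = l := by
  constructor
  · intro h
    constructor
    · have := congrArg (fun d => d 0) h; simpa [ee, Finsupp.single_apply] using this
    · have := congrArg (fun d => d 1) h; simpa [ee, Finsupp.single_apply] using this
  · rintro ⟨rfl, rfl⟩; rfl

lemma ee_add (i j k l : ℕ) : ee i j + ee k l = ee (i+k) (j+l) := by
  ext t; fin_cases t <;> simp [ee, Finsupp.single_apply]

lemma d_eq (d : Fin 2 →₀ ℕ) : d = ee (d 0) (d 1) := by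
  ext t; fin_cases t <;> simp [ee, Finsupp.single_apply]

lemma xiyj (i j : ℕ) : (X 0 ^ i * X 1 ^ j : P) = monomial (ee i j) 1 := by
  rw [X_pow_eq_monomial, X_pow_eq_monomial, monomial_mul, one_mul]; rfl

lemma g1_def (a : ℂ) : pderiv 0 (f a) = 4 * X 0 ^ 3 + 2 * C a * X 0 * X 1 ^ 2 := by
  simp [f, pderiv_X, derivation_C, map_add, Derivation.leibniz, Derivation.leibniz_pow]
  ring

lemma g2_def (a : ℂ) : pderiv 1 (f a) = 4 * X 1 ^ 3 + 2 * C a * X 0 ^ 2 * X 1 := by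
  simp [f, pderiv_X, derivation_C, map_add, Derivation.leibniz, Derivation.leibniz_pow]
  ring

lemma G1_eq (a : ℂ) : (4 * X 0 ^ 3 + 2 * C a * X 0 * X 1 ^ 2 : P)
    = monomial (ee 3 0) 4 + monomial (ee 1 2) (2*a) := by
  have h1 : (monomial (ee 3 0) (4:ℂ) : P) = C 4 * (X 0 ^ 3 * X 1 ^ 0) := by
    rw [xiyj, C_mul_monomial, mul_one]
  have h2 : (monomial (ee 1 2) (2*a) : P) = C (2*a) * (X 0 ^ 1 * X 1 ^ 2) := by
    rw [xiyj, C_mul_monomial, mul_one]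
  rw [h1, h2]
  simp only [map_mul, map_ofNat]
  ring

lemma G2_eq (a : ℂ) : (4 * X 1 ^ 3 + 2 * C a * X 0 ^ 2 * X 1 : P)
    = monomial (ee 0 3) 4 + monomial (ee 2 1) (2*a) := by
  have h1 : (monomial (ee 0 3) (4:ℂ) : P) = C 4 * (X 0 ^ 0 * X 1 ^ 3) := by
    rw [xiyj, C_mul_monomial, mul_one]
  have h2 : (monomial (ee 2 1) (2*a) : P) = C (2*a) * (X 0 ^ 2 * X 1 ^ 1) := by
    rw [xiyj, C_mul_monomial, mul_one]
  rw [h1, h2]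
  simp only [map_mul, map_ofNat]
  ring

noncomputable def lam (a : ℂ) : Fin 9 → (P →ₗ[ℂ] ℂ)
  | 0 => lcoeff ℂ (ee 0 0)
  | 1 => lcoeff ℂ (ee 1 0)
  | 2 => lcoeff ℂ (ee 0 1)
  | 3 => lcoeff ℂ (ee 2 0)
  | 4 => lcoeff ℂ (ee 1 1)
  | 5 => lcoeff ℂ (ee 0 2)
  | 6 => lcoeff ℂ (ee 2 1) - (a/2) • lcoeff ℂ (ee 0 3)
  | 7 => lcoeff ℂ (ee 1 2) - (a/2) • lcoeff ℂ (ee 3 0)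
  | 8 => lcoeff ℂ (ee 2 2) - (a/2) • (lcoeff ℂ (ee 4 0) + lcoeff ℂ (ee 0 4))

set_option maxHeartbeats 1000000 in
lemma lam_mul_g1 (a : ℂ) (i : Fin 9) (u : P) :
    lam a i (u * (monomial (ee 3 0) 4 + monomial (ee 1 2) (2*a))) = 0 := by
  induction u using MvPolynomial.induction_on' with
  | add p q hp hq => rw [add_mul, map_add, hp, hq, add_zero]
  | monomial d c =>
    rw [d_eq d]
    fin_cases i <;>
      simp only [lam, LinearMap.sub_apply, LinearMap.smul_apply, LinearMap.add_apply,
        lcoeff_apply, mul_add, coeff_add, monomial_mul, ee_add, coeff_monomial,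
        smul_eq_mul, eeq] <;>
      split_ifs <;> first | (exfalso; omega) | ring1 | simp_all

set_option maxHeartbeats 1000000 in
lemma lam_mul_g2 (a : ℂ) (i : Fin 9) (u : P) :
    lam a i (u * (monomial (ee 0 3) 4 + monomial (ee 2 1) (2*a))) = 0 := by
  induction u using MvPolynomial.induction_on' with
  | add p q hp hq => rw [add_mul, map_add, hp, hq, add_zero]
  | monomial d c =>
    rw [d_eq d]
    fin_cases i <;>
      simp only [lam, LinearMap.sub_apply, LinearMap.smul_apply, LinearMap.add_apply,
        lcoeff_apply, mul_add, coeff_add, monomial_mul, ee_add, coeff_monomial,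
        smul_eq_mul, eeq] <;>
      split_ifs <;> first | (exfalso; omega) | ring1 | simp_all

lemma lam_vanish (a : ℂ) (i : Fin 9) {p : P} (hp : p ∈ J a) : lam a i p = 0 := by
  rw [J, g1_def, g2_def, G1_eq, G2_eq, Ideal.mem_span_pair] at hp
  obtain ⟨u, v, h⟩ := hp
  rw [← h, map_add, lam_mul_g1, lam_mul_g2, add_zero]

lemma sum_nine {M : Type*} [AddCommMonoid M] (v : Fin 9 → M) :
    ∑ j, v j = v 0 + (v 1 + (v 2 + (v 3 + (v 4 + (v 5 + (v 6 + (v 7 + v 8))))))) := by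
  rw [Fin.sum_univ_succ, Fin.sum_univ_succ, Fin.sum_univ_succ, Fin.sum_univ_succ,
    Fin.sum_univ_succ, Fin.sum_univ_succ, Fin.sum_univ_succ, Fin.sum_univ_succ,
    Fin.sum_univ_one]
  rfl

lemma lam_dual (a : ℂ) (g : Fin 9 → ℂ) (i : Fin 9) :
    lam a i (∑ j, C (g j) * mono₉ j) = g i := by
  rw [sum_nine]
  have e : ∀ (k : Fin 9) (i j : ℕ), mono₉ k = X 0 ^ i * X 1 ^ j →
      C (g k) * mono₉ k = monomial (ee i j) (g k) := by
    intro k i j h; rw [h, xiyj, C_mul_monomial, mul_one]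
  rw [e 0 0 0 (by simp [mono₉]), e 1 1 0 (by simp [mono₉]), e 2 0 1 (by simp [mono₉]),
    e 3 2 0 (by simp [mono₉]), e 4 1 1 (by simp [mono₉]),
    e 5 0 2 (by rw [show (mono₉ 5 : P) = X 1 ^ 2 from rfl]; ring),
    e 6 2 1 (by rw [show (mono₉ 6 : P) = X 0 ^ 2 * X 1 from rfl]; ring),
    e 7 1 2 (by rw [show (mono₉ 7 : P) = X 0 * X 1 ^ 2 from rfl]; ring),
    e 8 2 2 rfl]
  fin_cases i <;>
    simp only [lam, map_add, LinearMap.sub_apply, LinearMap.smul_apply, LinearMap.add_apply,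
      lcoeff_apply, coeff_add, coeff_monomial, smul_eq_mul, eeq] <;>
    norm_num <;> try rfl

lemma Qsmul (a c : ℂ) (p : P) :
    Ideal.Quotient.mk (J a) (C c * p) = c • Ideal.Quotient.mk (J a) p := by
  rw [← smul_eq_C_mul]
  rfl

lemma li9 {a : ℂ} (ha : a ^ 2 ≠ 4) :
    LinearIndependent ℂ (fun i => Ideal.Quotient.mk (J a) (mono₉ i)) := by
  rw [Fintype.linearIndependent_iff]
  intro g hg i
  have hp : (∑ j, C (g j) * mono₉ j) ∈ J a := by
    rw [← Ideal.Quotient.eq_zero_iff_mem, map_sum]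
    simpa [Qsmul] using hg
  have h := lam_vanish a i hp
  rwa [lam_dual] at h

/- ----------------  membership in the Jacobian ideal  ---------------- -/

lemma mem_of_C_mul {I : Ideal P} {c : ℂ} (hc : c ≠ 0)
    {p : P} (h : C c * p ∈ I) : p ∈ I := by
  have := I.mul_mem_left (C c⁻¹) h
  rwa [← mul_assoc, ← map_mul, inv_mul_cancel₀ hc, map_one, one_mul] at this

lemma hg1 (a : ℂ) : (4 * X 0 ^ 3 + 2 * C a * X 0 * X 1 ^ 2 : P) ∈ J a := by
  rw [← g1_def]; exact Ideal.subset_span (by simp)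

lemma hg2 (a : ℂ) : (4 * X 1 ^ 3 + 2 * C a * X 0 ^ 2 * X 1 : P) ∈ J a := by
  rw [← g2_def]; exact Ideal.subset_span (by simp)

lemma mem_x3y {a : ℂ} (ha : a ^ 2 ≠ 4) : (X 0 ^ 3 * X 1 : P) ∈ J a := by
  have h4 : (4 * (4 - a ^ 2) : ℂ) ≠ 0 :=
    mul_ne_zero (by norm_num) (sub_ne_zero.mpr (Ne.symm ha))
  apply mem_of_C_mul h4
  have key : (C (4 * (4 - a ^ 2)) : P) * (X 0 ^ 3 * X 1)
      = (4 * X 1) * (4 * X 0 ^ 3 + 2 * C a * X 0 * X 1 ^ 2)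
        - (2 * C a * X 0) * (4 * X 1 ^ 3 + 2 * C a * X 0 ^ 2 * X 1) := by
    simp only [map_mul, map_sub, map_pow, map_ofNat]
    ring
  rw [key]
  exact sub_mem (Ideal.mul_mem_left _ _ (hg1 a)) (Ideal.mul_mem_left _ _ (hg2 a))

lemma mem_xy3 {a : ℂ} (ha : a ^ 2 ≠ 4) : (X 0 * X 1 ^ 3 : P) ∈ J a := by
  have h4 : (4 * (4 - a ^ 2) : ℂ) ≠ 0 :=
    mul_ne_zero (by norm_num) (sub_ne_zero.mpr (Ne.symm ha))
  apply mem_of_C_mul h4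
  have key : (C (4 * (4 - a ^ 2)) : P) * (X 0 * X 1 ^ 3)
      = (4 * X 0) * (4 * X 1 ^ 3 + 2 * C a * X 0 ^ 2 * X 1)
        - (2 * C a * X 1) * (4 * X 0 ^ 3 + 2 * C a * X 0 * X 1 ^ 2) := by
    simp only [map_mul, map_sub, map_pow, map_ofNat]
    ring
  rw [key]
  exact sub_mem (Ideal.mul_mem_left _ _ (hg2 a)) (Ideal.mul_mem_left _ _ (hg1 a))

lemma mem_x5 {a : ℂ} (ha : a ^ 2 ≠ 4) : (X 0 ^ 5 : P) ∈ J a := by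
  apply mem_of_C_mul (c := 4) (by norm_num)
  have key : (C 4 : P) * X 0 ^ 5
      = X 0 ^ 2 * (4 * X 0 ^ 3 + 2 * C a * X 0 * X 1 ^ 2)
        - (2 * C a * X 1) * (X 0 ^ 3 * X 1) := by
    simp only [map_ofNat]; ring
  rw [key]
  exact sub_mem (Ideal.mul_mem_left _ _ (hg1 a)) (Ideal.mul_mem_left _ _ (mem_x3y ha))

lemma mem_y5 {a : ℂ} (ha : a ^ 2 ≠ 4) : (X 1 ^ 5 : P) ∈ J a := by
  apply mem_of_C_mul (c := 4) (by norm_num)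
  have key : (C 4 : P) * X 1 ^ 5
      = X 1 ^ 2 * (4 * X 1 ^ 3 + 2 * C a * X 0 ^ 2 * X 1)
        - (2 * C a * X 0) * (X 0 * X 1 ^ 3) := by
    simp only [map_ofNat]; ring
  rw [key]
  exact sub_mem (Ideal.mul_mem_left _ _ (hg2 a)) (Ideal.mul_mem_left _ _ (mem_xy3 ha))

/- ----------------------------  spanning  ---------------------------- -/

noncomputable def S9 (a : ℂ) : Submodule ℂ (A a) :=
  Submodule.span ℂ (Set.range (fun i => Q a (mono₉ i)))

lemma hg1' {a : ℂ} : (4 * X 0 ^ 3 + 2 * C a * (X 0 * X 1 ^ 2) : P) ∈ J a := by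
  have h : (4 * X 0 ^ 3 + 2 * C a * (X 0 * X 1 ^ 2) : P) = pderiv 0 (f a) := by
    rw [g1_def]; ring
  rw [h]; exact Ideal.subset_span (by simp)

lemma hg2' {a : ℂ} : (4 * X 1 ^ 3 + 2 * C a * (X 0 ^ 2 * X 1) : P) ∈ J a := by
  have h : (4 * X 1 ^ 3 + 2 * C a * (X 0 ^ 2 * X 1) : P) = pderiv 1 (f a) := by
    rw [g2_def]; ring
  rw [h]; exact Ideal.subset_span (by simp)

lemma hg1x {a : ℂ} : (4 * X 0 ^ 4 + 2 * C a * (X 0 ^ 2 * X 1 ^ 2) : P) ∈ J a := by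
  have h : (4 * X 0 ^ 4 + 2 * C a * (X 0 ^ 2 * X 1 ^ 2) : P) = X 0 * pderiv 0 (f a) := by
    rw [g1_def]; ring
  rw [h]; exact Ideal.mul_mem_left _ _ (Ideal.subset_span (by simp))

lemma hg2y {a : ℂ} : (4 * X 1 ^ 4 + 2 * C a * (X 0 ^ 2 * X 1 ^ 2) : P) ∈ J a := by
  have h : (4 * X 1 ^ 4 + 2 * C a * (X 0 ^ 2 * X 1 ^ 2) : P) = X 1 * pderiv 1 (f a) := by
    rw [g2_def]; ring
  rw [h]; exact Ideal.mul_mem_left _ _ (Ideal.subset_span (by simp))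

lemma red {a : ℂ} {p q : P} (h : (4 * p + 2 * C a * q : P) ∈ J a)
    (hq : Q a q ∈ S9 a) : Q a p ∈ S9 a := by
  have e : (4 * p + 2 * C a * q : P) = C (4 : ℂ) * p + C (2 * a) * q := by
    simp only [map_mul, map_ofNat]; try ring
  have h0 : (4:ℂ) • Q a p + (2*a) • Q a q = 0 := by
    rw [← Qsmul, ← Qsmul, ← map_add, ← e, Ideal.Quotient.eq_zero_iff_mem]; exact h
  have h1 : (4:ℂ) • Q a p = -((2*a) • Q a q) := eq_neg_of_add_eq_zero_left h0
  have h2 : Q a p = (1/4 : ℂ) • ((4:ℂ) • Q a p) := by rw [smul_smul]; norm_num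
  rw [h2, h1]
  exact Submodule.smul_mem _ _ (Submodule.neg_mem _ (Submodule.smul_mem _ _ hq))

lemma span9 {a : ℂ} (ha : a ^ 2 ≠ 4) (i j : ℕ) : Q a (X 0 ^ i * X 1 ^ j) ∈ S9 a := by
  have hz : ∀ p : P, p ∈ J a → Q a p ∈ S9 a := by
    intro p hp; rw [Ideal.Quotient.eq_zero_iff_mem.mpr hp]; exact zero_mem _
  have hdir : ∀ (k : Fin 9), mono₉ k = X 0 ^ i * X 1 ^ j → Q a (X 0 ^ i * X 1 ^ j) ∈ S9 a := by
    intro k hk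
    exact Submodule.subset_span ⟨k, congrArg _ hk⟩
  by_cases hx5 : 5 ≤ i
  · obtain ⟨k, rfl⟩ : ∃ k, i = k + 5 := ⟨i - 5, by omega⟩
    apply hz
    have h := Ideal.mul_mem_left (J a) (X 0 ^ k * X 1 ^ j) (mem_x5 ha)
    have e : (X 0 ^ k * X 1 ^ j * X 0 ^ 5 : P) = X 0 ^ (k + 5) * X 1 ^ j := by ring
    rwa [e] at h
  by_cases hy5 : 5 ≤ j
  · obtain ⟨l, rfl⟩ : ∃ l, j = l + 5 := ⟨j - 5, by omega⟩
    apply hz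
    have h := Ideal.mul_mem_left (J a) (X 0 ^ i * X 1 ^ l) (mem_y5 ha)
    have e : (X 0 ^ i * X 1 ^ l * X 1 ^ 5 : P) = X 0 ^ i * X 1 ^ (l + 5) := by ring
    rwa [e] at h
  by_cases hxy : 3 ≤ i ∧ 1 ≤ j
  · obtain ⟨k, rfl⟩ : ∃ k, i = k + 3 := ⟨i - 3, by omega⟩
    obtain ⟨l, rfl⟩ : ∃ l, j = l + 1 := ⟨j - 1, by omega⟩
    apply hz
    have h := Ideal.mul_mem_left (J a) (X 0 ^ k * X 1 ^ l) (mem_x3y ha)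
    have e : (X 0 ^ k * X 1 ^ l * (X 0 ^ 3 * X 1) : P) = X 0 ^ (k + 3) * X 1 ^ (l + 1) := by ring
    rwa [e] at h
  by_cases hyx : 1 ≤ i ∧ 3 ≤ j
  · obtain ⟨k, rfl⟩ : ∃ k, i = k + 1 := ⟨i - 1, by omega⟩
    obtain ⟨l, rfl⟩ : ∃ l, j = l + 3 := ⟨j - 3, by omega⟩
    apply hz
    have h := Ideal.mul_mem_left (J a) (X 0 ^ k * X 1 ^ l) (mem_xy3 ha)
    have e : (X 0 ^ k * X 1 ^ l * (X 0 * X 1 ^ 3) : P) = X 0 ^ (k + 1) * X 1 ^ (l + 3) := by ring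
    rwa [e] at h
  have hi : i ≤ 4 := by omega
  have hj : j ≤ 4 := by omega
  have h7 : Q a (X 0 * X 1 ^ 2) ∈ S9 a := Submodule.subset_span ⟨7, rfl⟩
  have h8 : Q a (X 0 ^ 2 * X 1 ^ 2) ∈ S9 a := Submodule.subset_span ⟨8, rfl⟩
  have h6 : Q a (X 0 ^ 2 * X 1) ∈ S9 a := Submodule.subset_span ⟨6, rfl⟩
  interval_cases i <;> interval_cases j
  all_goals try (exfalso; omega)
  · exact hdir 0 (by rw [show (mono₉ 0 : P) = 1 from rfl]; ring)
  · exact hdir 2 (by rw [show (mono₉ 2 : P) = X 1 from rfl]; ring)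
  · exact hdir 5 (by rw [show (mono₉ 5 : P) = X 1 ^ 2 from rfl]; ring)
  · rw [show (X 0 ^ 0 * X 1 ^ 3 : P) = X 1 ^ 3 from by ring]
    exact red hg2' h6
  · rw [show (X 0 ^ 0 * X 1 ^ 4 : P) = X 1 ^ 4 from by ring]
    exact red hg2y h8
  · exact hdir 1 (by rw [show (mono₉ 1 : P) = X 0 from rfl]; ring)
  · exact hdir 4 (by rw [show (mono₉ 4 : P) = X 0 * X 1 from rfl]; ring)
  · exact hdir 7 (by rw [show (mono₉ 7 : P) = X 0 * X 1 ^ 2 from rfl]; ring)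
  · exact hdir 3 (by rw [show (mono₉ 3 : P) = X 0 ^ 2 from rfl]; ring)
  · exact hdir 6 (by rw [show (mono₉ 6 : P) = X 0 ^ 2 * X 1 from rfl]; ring)
  · exact hdir 8 rfl
  · rw [show (X 0 ^ 3 * X 1 ^ 0 : P) = X 0 ^ 3 from by ring]
    exact red hg1' h7
  · rw [show (X 0 ^ 4 * X 1 ^ 0 : P) = X 0 ^ 4 from by ring]
    exact red hg1x h8

lemma top9 {a : ℂ} (ha : a ^ 2 ≠ 4) : S9 a = ⊤ := by
  rw [eq_top_iff]
  rintro z -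
  obtain ⟨p, rfl⟩ := Ideal.Quotient.mk_surjective z
  induction p using MvPolynomial.induction_on' with
  | add p q hp hq => rw [map_add]; exact add_mem hp hq
  | monomial d c =>
    have e : (monomial d c : P) = C c * (X 0 ^ (d 0) * X 1 ^ (d 1)) := by
      rw [xiyj, C_mul_monomial, mul_one, ← d_eq]
    rw [e, Qsmul]
    exact Submodule.smul_mem _ _ (span9 ha _ _)

/- ----------------------------  the basis  --------------------------- -/

noncomputable def b9 {a : ℂ} (ha : a ^ 2 ≠ 4) : Module.Basis (Fin 9) ℂ (A a) :=
  Module.Basis.mk (li9 ha) (ge_of_eq (top9 ha))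

lemma b9_apply {a : ℂ} (ha : a ^ 2 ≠ 4) (i : Fin 9) : b9 ha i = Q a (mono₉ i) :=
  Module.Basis.mk_apply _ _ _

/- ------------------------  fixed point spaces  ----------------------- -/

noncomputable def e9 : Fin 9 → ℂ
  | 0 => 1 | 1 => -1 | 2 => -1 | 3 => 1 | 4 => 1 | 5 => 1 | 6 => -1 | 7 => -1 | 8 => 1

noncomputable def e1 : Fin 9 → ℂ
  | 0 => 1 | 1 => -1 | 2 => 1 | 3 => 1 | 4 => -1 | 5 => 1 | 6 => 1 | 7 => -1 | 8 => 1

noncomputable def e2 : Fin 9 → ℂ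
  | 0 => 1 | 1 => 1 | 2 => -1 | 3 => 1 | 4 => -1 | 5 => 1 | 6 => -1 | 7 => 1 | 8 => 1

lemma act_of {a : ℂ} (φ : A a →ₐ[ℂ] A a) (w : Fin 2 → P)
    (hφ : ∀ p : P, φ (Ideal.Quotient.mk (J a) p) = Ideal.Quotient.mk (J a) (aeval w p))
    (e : Fin 9 → ℂ)
    (hae : ∀ i : Fin 9, aeval w (mono₉ i) = C (e i) * mono₉ i) (i : Fin 9) :
    φ.toLinearMap (Q a (mono₉ i)) = e i • Q a (mono₉ i) := by
  rw [AlgHom.toLinearMap_apply, hφ, hae, Qsmul]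

lemma hae_m (i : Fin 9) :
    aeval ![-X 0, -X 1] (mono₉ i) = C (e9 i) * mono₉ i := by
  fin_cases i
  · show (aeval ![-X 0, -X 1] (1) : P) = C ((1 : ℂ)) * (1)
    simp only [map_one, map_mul, map_pow, map_neg, aeval_X, Matrix.cons_val_zero,
      Matrix.cons_val_one, Matrix.head_cons, C_1]
    try ring1
  · show (aeval ![-X 0, -X 1] (X 0) : P) = C ((-1 : ℂ)) * (X 0)
    simp only [map_one, map_mul, map_pow, map_neg, aeval_X, Matrix.cons_val_zero,
      Matrix.cons_val_one, Matrix.head_cons, C_1]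
    try ring1
  · show (aeval ![-X 0, -X 1] (X 1) : P) = C ((-1 : ℂ)) * (X 1)
    simp only [map_one, map_mul, map_pow, map_neg, aeval_X, Matrix.cons_val_zero,
      Matrix.cons_val_one, Matrix.head_cons, C_1]
    try ring1
  · show (aeval ![-X 0, -X 1] (X 0 ^ 2) : P) = C ((1 : ℂ)) * (X 0 ^ 2)
    simp only [map_one, map_mul, map_pow, map_neg, aeval_X, Matrix.cons_val_zero,
      Matrix.cons_val_one, Matrix.head_cons, C_1]
    try ring1
  · show (aeval ![-X 0, -X 1] (X 0 * X 1) : P) = C ((1 : ℂ)) * (X 0 * X 1)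
    simp only [map_one, map_mul, map_pow, map_neg, aeval_X, Matrix.cons_val_zero,
      Matrix.cons_val_one, Matrix.head_cons, C_1]
    try ring1
  · show (aeval ![-X 0, -X 1] (X 1 ^ 2) : P) = C ((1 : ℂ)) * (X 1 ^ 2)
    simp only [map_one, map_mul, map_pow, map_neg, aeval_X, Matrix.cons_val_zero,
      Matrix.cons_val_one, Matrix.head_cons, C_1]
    try ring1
  · show (aeval ![-X 0, -X 1] (X 0 ^ 2 * X 1) : P) = C ((-1 : ℂ)) * (X 0 ^ 2 * X 1)
    simp only [map_one, map_mul, map_pow, map_neg, aeval_X, Matrix.cons_val_zero,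
      Matrix.cons_val_one, Matrix.head_cons, C_1]
    try ring1
  · show (aeval ![-X 0, -X 1] (X 0 * X 1 ^ 2) : P) = C ((-1 : ℂ)) * (X 0 * X 1 ^ 2)
    simp only [map_one, map_mul, map_pow, map_neg, aeval_X, Matrix.cons_val_zero,
      Matrix.cons_val_one, Matrix.head_cons, C_1]
    try ring1
  · show (aeval ![-X 0, -X 1] (X 0 ^ 2 * X 1 ^ 2) : P) = C ((1 : ℂ)) * (X 0 ^ 2 * X 1 ^ 2)
    simp only [map_one, map_mul, map_pow, map_neg, aeval_X, Matrix.cons_val_zero,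
      Matrix.cons_val_one, Matrix.head_cons, C_1]
    try ring1

lemma hae_1 (i : Fin 9) :
    aeval ![-X 0, X 1] (mono₉ i) = C (e1 i) * mono₉ i := by
  fin_cases i
  · show (aeval ![-X 0, X 1] (1) : P) = C ((1 : ℂ)) * (1)
    simp only [map_one, map_mul, map_pow, map_neg, aeval_X, Matrix.cons_val_zero,
      Matrix.cons_val_one, Matrix.head_cons, C_1]
    try ring1
  · show (aeval ![-X 0, X 1] (X 0) : P) = C ((-1 : ℂ)) * (X 0)
    simp only [map_one, map_mul, map_pow, map_neg, aeval_X, Matrix.cons_val_zero,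
      Matrix.cons_val_one, Matrix.head_cons, C_1]
    try ring1
  · show (aeval ![-X 0, X 1] (X 1) : P) = C ((1 : ℂ)) * (X 1)
    simp only [map_one, map_mul, map_pow, map_neg, aeval_X, Matrix.cons_val_zero,
      Matrix.cons_val_one, Matrix.head_cons, C_1]
    try ring1
  · show (aeval ![-X 0, X 1] (X 0 ^ 2) : P) = C ((1 : ℂ)) * (X 0 ^ 2)
    simp only [map_one, map_mul, map_pow, map_neg, aeval_X, Matrix.cons_val_zero,
      Matrix.cons_val_one, Matrix.head_cons, C_1]
    try ring1
  · show (aeval ![-X 0, X 1] (X 0 * X 1) : P) = C ((-1 : ℂ)) * (X 0 * X 1)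
    simp only [map_one, map_mul, map_pow, map_neg, aeval_X, Matrix.cons_val_zero,
      Matrix.cons_val_one, Matrix.head_cons, C_1]
    try ring1
  · show (aeval ![-X 0, X 1] (X 1 ^ 2) : P) = C ((1 : ℂ)) * (X 1 ^ 2)
    simp only [map_one, map_mul, map_pow, map_neg, aeval_X, Matrix.cons_val_zero,
      Matrix.cons_val_one, Matrix.head_cons, C_1]
    try ring1
  · show (aeval ![-X 0, X 1] (X 0 ^ 2 * X 1) : P) = C ((1 : ℂ)) * (X 0 ^ 2 * X 1)
    simp only [map_one, map_mul, map_pow, map_neg, aeval_X, Matrix.cons_val_zero,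
      Matrix.cons_val_one, Matrix.head_cons, C_1]
    try ring1
  · show (aeval ![-X 0, X 1] (X 0 * X 1 ^ 2) : P) = C ((-1 : ℂ)) * (X 0 * X 1 ^ 2)
    simp only [map_one, map_mul, map_pow, map_neg, aeval_X, Matrix.cons_val_zero,
      Matrix.cons_val_one, Matrix.head_cons, C_1]
    try ring1
  · show (aeval ![-X 0, X 1] (X 0 ^ 2 * X 1 ^ 2) : P) = C ((1 : ℂ)) * (X 0 ^ 2 * X 1 ^ 2)
    simp only [map_one, map_mul, map_pow, map_neg, aeval_X, Matrix.cons_val_zero,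
      Matrix.cons_val_one, Matrix.head_cons, C_1]
    try ring1

lemma hae_2 (i : Fin 9) :
    aeval ![X 0, -X 1] (mono₉ i) = C (e2 i) * mono₉ i := by
  fin_cases i
  · show (aeval ![X 0, -X 1] (1) : P) = C ((1 : ℂ)) * (1)
    simp only [map_one, map_mul, map_pow, map_neg, aeval_X, Matrix.cons_val_zero,
      Matrix.cons_val_one, Matrix.head_cons, C_1]
    try ring1
  · show (aeval ![X 0, -X 1] (X 0) : P) = C ((1 : ℂ)) * (X 0)
    simp only [map_one, map_mul, map_pow, map_neg, aeval_X, Matrix.cons_val_zero,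
      Matrix.cons_val_one, Matrix.head_cons, C_1]
    try ring1
  · show (aeval ![X 0, -X 1] (X 1) : P) = C ((-1 : ℂ)) * (X 1)
    simp only [map_one, map_mul, map_pow, map_neg, aeval_X, Matrix.cons_val_zero,
      Matrix.cons_val_one, Matrix.head_cons, C_1]
    try ring1
  · show (aeval ![X 0, -X 1] (X 0 ^ 2) : P) = C ((1 : ℂ)) * (X 0 ^ 2)
    simp only [map_one, map_mul, map_pow, map_neg, aeval_X, Matrix.cons_val_zero,
      Matrix.cons_val_one, Matrix.head_cons, C_1]
    try ring1
  · show (aeval ![X 0, -X 1] (X 0 * X 1) : P) = C ((-1 : ℂ)) * (X 0 * X 1)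
    simp only [map_one, map_mul, map_pow, map_neg, aeval_X, Matrix.cons_val_zero,
      Matrix.cons_val_one, Matrix.head_cons, C_1]
    try ring1
  · show (aeval ![X 0, -X 1] (X 1 ^ 2) : P) = C ((1 : ℂ)) * (X 1 ^ 2)
    simp only [map_one, map_mul, map_pow, map_neg, aeval_X, Matrix.cons_val_zero,
      Matrix.cons_val_one, Matrix.head_cons, C_1]
    try ring1
  · show (aeval ![X 0, -X 1] (X 0 ^ 2 * X 1) : P) = C ((-1 : ℂ)) * (X 0 ^ 2 * X 1)
    simp only [map_one, map_mul, map_pow, map_neg, aeval_X, Matrix.cons_val_zero,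
      Matrix.cons_val_one, Matrix.head_cons, C_1]
    try ring1
  · show (aeval ![X 0, -X 1] (X 0 * X 1 ^ 2) : P) = C ((1 : ℂ)) * (X 0 * X 1 ^ 2)
    simp only [map_one, map_mul, map_pow, map_neg, aeval_X, Matrix.cons_val_zero,
      Matrix.cons_val_one, Matrix.head_cons, C_1]
    try ring1
  · show (aeval ![X 0, -X 1] (X 0 ^ 2 * X 1 ^ 2) : P) = C ((1 : ℂ)) * (X 0 ^ 2 * X 1 ^ 2)
    simp only [map_one, map_mul, map_pow, map_neg, aeval_X, Matrix.cons_val_zero,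
      Matrix.cons_val_one, Matrix.head_cons, C_1]
    try ring1

lemma coef_vanish {a : ℂ} (ha : a ^ 2 ≠ 4) (ψ : A a →ₗ[ℂ] A a) (e : Fin 9 → ℂ)
    (act : ∀ i, ψ (Q a (mono₉ i)) = e i • Q a (mono₉ i))
    {z : A a} (hz : ψ z = z) (i : Fin 9) (hei : e i = -1) : (b9 ha).repr z i = 0 := by
  have h1 : ψ z = ∑ j, (e j * (b9 ha).repr z j) • (b9 ha) j := by
    conv_lhs => rw [← Module.Basis.sum_repr (b9 ha) z]
    rw [map_sum]
    refine Finset.sum_congr rfl fun j _ => ?_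
    rw [map_smul, b9_apply, act, smul_smul, mul_comm]
  have h4 : e i * (b9 ha).repr z i = (b9 ha).repr z i := by
    have h3 := congrArg (b9 ha).repr (h1.symm.trans hz)
    have h5 := DFunLike.congr_fun h3 i
    have h6 := congrFun (Module.Basis.repr_sum_self (b9 ha) (fun j => e j * (b9 ha).repr z j)) i
    exact h6.symm.trans h5
  rw [hei] at h4
  linear_combination -h4/2

noncomputable def g5 : Fin 5 → Fin 9
  | 0 => 0 | 1 => 3 | 2 => 4 | 3 => 5 | 4 => 8

noncomputable def g4 : Fin 4 → Fin 9
  | 0 => 0 | 1 => 3 | 2 => 5 | 3 => 8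

lemma fix5 {a : ℂ} (ha : a ^ 2 ≠ 4) (φ : A a →ₐ[ℂ] A a)
    (hφ : ∀ p : MvPolynomial (Fin 2) ℂ,
      φ (Ideal.Quotient.mk (J a) p) = Ideal.Quotient.mk (J a) (aeval ![-X 0, -X 1] p)) :
    Module.finrank ℂ (fixedPts φ.toLinearMap) = 5 ∧
      ∃ b : Module.Basis (Fin 5) ℂ (fixedPts φ.toLinearMap),
        ∀ i, (b i : A a) = Ideal.Quotient.mk (J a) (mono₅ i) := by
  have act := act_of φ _ hφ e9 hae_m
  have li5 : LinearIndependent ℂ (fun k : Fin 5 => Q a (mono₅ k)) := by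
    have h : (fun k : Fin 5 => Q a (mono₅ k)) = (fun i => Q a (mono₉ i)) ∘ g5 := by
      funext k; fin_cases k <;> rfl
    rw [h]
    exact (li9 ha).comp g5 (by decide)
  have hmem : ∀ k : Fin 5, Q a (mono₅ k) ∈ fixedPts φ.toLinearMap := by
    intro k
    fin_cases k
    · show φ.toLinearMap (Q a (mono₉ 0)) = Q a (mono₉ 0)
      have h := act 0; rwa [show (e9 0 : ℂ) = 1 from rfl, one_smul] at h
    · show φ.toLinearMap (Q a (mono₉ 3)) = Q a (mono₉ 3)
      have h := act 3; rwa [show (e9 3 : ℂ) = 1 from rfl, one_smul] at h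
    · show φ.toLinearMap (Q a (mono₉ 4)) = Q a (mono₉ 4)
      have h := act 4; rwa [show (e9 4 : ℂ) = 1 from rfl, one_smul] at h
    · show φ.toLinearMap (Q a (mono₉ 5)) = Q a (mono₉ 5)
      have h := act 5; rwa [show (e9 5 : ℂ) = 1 from rfl, one_smul] at h
    · show φ.toLinearMap (Q a (mono₉ 8)) = Q a (mono₉ 8)
      have h := act 8; rwa [show (e9 8 : ℂ) = 1 from rfl, one_smul] at h
  have hspan : fixedPts φ.toLinearMap
      = Submodule.span ℂ (Set.range (fun k : Fin 5 => Q a (mono₅ k))) := by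
    apply le_antisymm
    · intro z hz
      have hz' : φ.toLinearMap z = z := hz
      have hv := coef_vanish ha φ.toLinearMap e9 act hz'
      rw [← Module.Basis.sum_repr (b9 ha) z]
      apply Submodule.sum_mem
      intro i _
      fin_cases i
      · show (b9 ha).repr z 0 • (b9 ha) 0 ∈ _
        exact Submodule.smul_mem _ _
          (Submodule.subset_span ⟨0, ((b9_apply ha 0).symm : _ = (b9 ha) 0)⟩)
      · show (b9 ha).repr z 1 • (b9 ha) 1 ∈ _
        rw [hv 1 rfl, zero_smul]; exact zero_mem _
      · show (b9 ha).repr z 2 • (b9 ha) 2 ∈ _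
        rw [hv 2 rfl, zero_smul]; exact zero_mem _
      · show (b9 ha).repr z 3 • (b9 ha) 3 ∈ _
        exact Submodule.smul_mem _ _
          (Submodule.subset_span ⟨1, ((b9_apply ha 3).symm : _ = (b9 ha) 3)⟩)
      · show (b9 ha).repr z 4 • (b9 ha) 4 ∈ _
        exact Submodule.smul_mem _ _
          (Submodule.subset_span ⟨2, ((b9_apply ha 4).symm : _ = (b9 ha) 4)⟩)
      · show (b9 ha).repr z 5 • (b9 ha) 5 ∈ _
        exact Submodule.smul_mem _ _
          (Submodule.subset_span ⟨3, ((b9_apply ha 5).symm : _ = (b9 ha) 5)⟩)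
      · show (b9 ha).repr z 6 • (b9 ha) 6 ∈ _
        rw [hv 6 rfl, zero_smul]; exact zero_mem _
      · show (b9 ha).repr z 7 • (b9 ha) 7 ∈ _
        rw [hv 7 rfl, zero_smul]; exact zero_mem _
      · show (b9 ha).repr z 8 • (b9 ha) 8 ∈ _
        exact Submodule.smul_mem _ _
          (Submodule.subset_span ⟨4, ((b9_apply ha 8).symm : _ = (b9 ha) 8)⟩)
    · rw [Submodule.span_le]
      rintro _ ⟨k, rfl⟩
      exact hmem k
  let bfix : Module.Basis (Fin 5) ℂ (fixedPts φ.toLinearMap) :=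
    (Module.Basis.span li5).map (LinearEquiv.ofEq _ _ hspan.symm)
  refine ⟨?_, ⟨bfix, ?_⟩⟩
  · rw [Module.finrank_eq_card_basis bfix, Fintype.card_fin]
  · intro k
    show ((bfix k : _) : A a) = Q a (mono₅ k)
    rw [show bfix k = (LinearEquiv.ofEq _ _ hspan.symm) ((Module.Basis.span li5) k) from
      Module.Basis.map_apply _ _ _, LinearEquiv.coe_ofEq_apply, Module.Basis.span_apply]

lemma fix4 {a : ℂ} (ha : a ^ 2 ≠ 4) (φ₁ : A a →ₐ[ℂ] A a)
    (hφ₁ : ∀ p : MvPolynomial (Fin 2) ℂ,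
      φ₁ (Ideal.Quotient.mk (J a) p) = Ideal.Quotient.mk (J a) (aeval ![-X 0, X 1] p))
    (φ₂ : A a →ₐ[ℂ] A a)
    (hφ₂ : ∀ p : MvPolynomial (Fin 2) ℂ,
      φ₂ (Ideal.Quotient.mk (J a) p) = Ideal.Quotient.mk (J a) (aeval ![X 0, -X 1] p)) :
    Module.finrank ℂ (fixedPts φ₁.toLinearMap ⊓ fixedPts φ₂.toLinearMap :
        Submodule ℂ (A a)) = 4 ∧
      ∃ b : Module.Basis (Fin 4) ℂ (fixedPts φ₁.toLinearMap ⊓ fixedPts φ₂.toLinearMap :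
          Submodule ℂ (A a)),
        ∀ i, (b i : A a) = Ideal.Quotient.mk (J a) (mono₄ i) := by
  have act1 := act_of φ₁ _ hφ₁ e1 hae_1
  have act2 := act_of φ₂ _ hφ₂ e2 hae_2
  have li4 : LinearIndependent ℂ (fun k : Fin 4 => Q a (mono₄ k)) := by
    have h : (fun k : Fin 4 => Q a (mono₄ k)) = (fun i => Q a (mono₉ i)) ∘ g4 := by
      funext k; fin_cases k <;> rfl
    rw [h]
    exact (li9 ha).comp g4 (by decide)
  have hfix : ∀ (ψ : A a →ₗ[ℂ] A a) (e : Fin 9 → ℂ),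
      (∀ i, ψ (Q a (mono₉ i)) = e i • Q a (mono₉ i)) → ∀ i : Fin 9, e i = 1 →
      ψ (Q a (mono₉ i)) = Q a (mono₉ i) := by
    intro ψ e hact i hei
    rw [hact i, hei, one_smul]
  have hmem : ∀ k : Fin 4, Q a (mono₄ k) ∈
      (fixedPts φ₁.toLinearMap ⊓ fixedPts φ₂.toLinearMap : Submodule ℂ (A a)) := by
    intro k
    rw [Submodule.mem_inf]
    fin_cases k
    · exact ⟨hfix _ e1 act1 0 rfl, hfix _ e2 act2 0 rfl⟩
    · exact ⟨hfix _ e1 act1 3 rfl, hfix _ e2 act2 3 rfl⟩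
    · exact ⟨hfix _ e1 act1 5 rfl, hfix _ e2 act2 5 rfl⟩
    · exact ⟨hfix _ e1 act1 8 rfl, hfix _ e2 act2 8 rfl⟩
  have hspan : (fixedPts φ₁.toLinearMap ⊓ fixedPts φ₂.toLinearMap : Submodule ℂ (A a))
      = Submodule.span ℂ (Set.range (fun k : Fin 4 => Q a (mono₄ k))) := by
    apply le_antisymm
    · intro z hz
      rw [Submodule.mem_inf] at hz
      have hz1 : φ₁.toLinearMap z = z := hz.1
      have hz2 : φ₂.toLinearMap z = z := hz.2
      have hv1 := coef_vanish ha φ₁.toLinearMap e1 act1 hz1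
      have hv2 := coef_vanish ha φ₂.toLinearMap e2 act2 hz2
      rw [← Module.Basis.sum_repr (b9 ha) z]
      apply Submodule.sum_mem
      intro i _
      fin_cases i
      · show (b9 ha).repr z 0 • (b9 ha) 0 ∈ _
        exact Submodule.smul_mem _ _
          (Submodule.subset_span ⟨0, ((b9_apply ha 0).symm : _ = (b9 ha) 0)⟩)
      · show (b9 ha).repr z 1 • (b9 ha) 1 ∈ _
        rw [hv1 1 rfl, zero_smul]; exact zero_mem _
      · show (b9 ha).repr z 2 • (b9 ha) 2 ∈ _
        rw [hv2 2 rfl, zero_smul]; exact zero_mem _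
      · show (b9 ha).repr z 3 • (b9 ha) 3 ∈ _
        exact Submodule.smul_mem _ _
          (Submodule.subset_span ⟨1, ((b9_apply ha 3).symm : _ = (b9 ha) 3)⟩)
      · show (b9 ha).repr z 4 • (b9 ha) 4 ∈ _
        rw [hv1 4 rfl, zero_smul]; exact zero_mem _
      · show (b9 ha).repr z 5 • (b9 ha) 5 ∈ _
        exact Submodule.smul_mem _ _
          (Submodule.subset_span ⟨2, ((b9_apply ha 5).symm : _ = (b9 ha) 5)⟩)
      · show (b9 ha).repr z 6 • (b9 ha) 6 ∈ _
        rw [hv2 6 rfl, zero_smul]; exact zero_mem _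
      · show (b9 ha).repr z 7 • (b9 ha) 7 ∈ _
        rw [hv1 7 rfl, zero_smul]; exact zero_mem _
      · show (b9 ha).repr z 8 • (b9 ha) 8 ∈ _
        exact Submodule.smul_mem _ _
          (Submodule.subset_span ⟨3, ((b9_apply ha 8).symm : _ = (b9 ha) 8)⟩)
    · rw [Submodule.span_le]
      rintro _ ⟨k, rfl⟩
      exact hmem k
  let bfix : Module.Basis (Fin 4) ℂ
      (fixedPts φ₁.toLinearMap ⊓ fixedPts φ₂.toLinearMap : Submodule ℂ (A a)) :=
    (Module.Basis.span li4).map (LinearEquiv.ofEq _ _ hspan.symm)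
  refine ⟨?_, ⟨bfix, ?_⟩⟩
  · rw [Module.finrank_eq_card_basis bfix, Fintype.card_fin]
  · intro k
    show ((bfix k : _) : A a) = Q a (mono₄ k)
    rw [show bfix k = (LinearEquiv.ofEq _ _ hspan.symm) ((Module.Basis.span li4) k) from
      Module.Basis.map_apply _ _ _, LinearEquiv.coe_ofEq_apply, Module.Basis.span_apply]

theorem milnor_algebra_of_M_singularity (a : ℂ) (ha : a ^ 2 ≠ 4)
    (φ : A a →ₐ[ℂ] A a)
    (hφ : ∀ p : MvPolynomial (Fin 2) ℂ,
      φ (Ideal.Quotient.mk (J a) p) = Ideal.Quotient.mk (J a) (aeval ![-X 0, -X 1] p))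
    (φ₁ : A a →ₐ[ℂ] A a)
    (hφ₁ : ∀ p : MvPolynomial (Fin 2) ℂ,
      φ₁ (Ideal.Quotient.mk (J a) p) = Ideal.Quotient.mk (J a) (aeval ![-X 0, X 1] p))
    (φ₂ : A a →ₐ[ℂ] A a)
    (hφ₂ : ∀ p : MvPolynomial (Fin 2) ℂ,
      φ₂ (Ideal.Quotient.mk (J a) p) = Ideal.Quotient.mk (J a) (aeval ![X 0, -X 1] p)) :
    (Module.finrank ℂ (A a) = 9 ∧
      ∃ b : Module.Basis (Fin 9) ℂ (A a), ∀ i, b i = Ideal.Quotient.mk (J a) (mono₉ i)) ∧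
    (Module.finrank ℂ (fixedPts φ.toLinearMap) = 5 ∧
      ∃ b : Module.Basis (Fin 5) ℂ (fixedPts φ.toLinearMap),
        ∀ i, (b i : A a) = Ideal.Quotient.mk (J a) (mono₅ i)) ∧
    (Module.finrank ℂ (fixedPts φ₁.toLinearMap ⊓ fixedPts φ₂.toLinearMap :
        Submodule ℂ (A a)) = 4 ∧
      ∃ b : Module.Basis (Fin 4) ℂ (fixedPts φ₁.toLinearMap ⊓ fixedPts φ₂.toLinearMap :
          Submodule ℂ (A a)),
        ∀ i, (b i : A a) = Ideal.Quotient.mk (J a) (mono₄ i)) := by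
  refine ⟨⟨?_, ⟨b9 ha, fun i => b9_apply ha i⟩⟩, fix5 ha φ hφ, fix4 ha φ₁ hφ₁ φ₂ hφ₂⟩
  rw [Module.finrank_eq_card_basis (b9 ha), Fintype.card_fin]
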